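/- For a Schwartz function f on ℝⁿ, the function (J^{m,0}f)(x,ξ) = ∫_{−∞}^{∞} t^m f(x+tξ) dt satisfies J_{ij}(J^{m,0}f) = 0 for all 1 ≤ i,j ≤ n, where J_{ij} = ∂²/∂x^i∂ξ^j − ∂²/∂x^j∂ξ^i is the John operator. -/

import Mathlib

/-- Partial derivative in the `i`-th `x`-direction for functions of `(x,ξ) ∈ ℝⁿ×ℝⁿ`. -/
noncomputable def pdx (n : ℕ) (i : Fin n) (ψ : (Fin n → ℝ) × (Fin n → ℝ) → ℝ) :
    (Fin n → ℝ) × (Fin n → ℝ) → ℝ :=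
  fun p => fderiv ℝ ψ p (Pi.single i 1, 0)

/-- Partial derivative in the `i`-th `ξ`-direction. -/
noncomputable def pdxi (n : ℕ) (i : Fin n) (ψ : (Fin n → ℝ) × (Fin n → ℝ) → ℝ) :
    (Fin n → ℝ) × (Fin n → ℝ) → ℝ :=
  fun p => fderiv ℝ ψ p (0, Pi.single i 1)

/-- The operator `⟨ξ,∂ₓ⟩ = Σ_p ξ^p ∂/∂x^p`. -/
noncomputable def Dx (n : ℕ) (ψ : (Fin n → ℝ) × (Fin n → ℝ) → ℝ) :
    (Fin n → ℝ) × (Fin n → ℝ) → ℝ :=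
  fun p => ∑ q : Fin n, p.2 q * pdx n q ψ p

/-- Mixed iterated derivative `∂^k/∂x^{j₁}…∂x^{j_q}∂ξ^{j_{q+1}}…∂ξ^{j_k}` along the
multi-index `I`: the first `q` slots are `x`-derivatives, the rest `ξ`-derivatives. -/
noncomputable def mixedD (n k : ℕ) (q : ℕ) (I : Fin k → Fin n)
    (ψ : (Fin n → ℝ) × (Fin n → ℝ) → ℝ) : (Fin n → ℝ) × (Fin n → ℝ) → ℝ :=
  (List.finRange k).foldr
    (fun (a : Fin k) acc => if (a : ℕ) < q then pdx n (I a) acc else pdxi n (I a) acc) ψ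

/-- Symmetrization (averaging over permutations) of a tensor-indexed family of functions. -/
noncomputable def symAvg (n k : ℕ)
    (T : (Fin k → Fin n) → (Fin n → ℝ) × (Fin n → ℝ) → ℝ) (I : Fin k → Fin n) :
    (Fin n → ℝ) × (Fin n → ℝ) → ℝ :=
  fun p => ((Nat.factorial k : ℝ))⁻¹ * ∑ π : Equiv.Perm (Fin k), T (I ∘ π) p

/-- The John operator `J_{ij} = ∂²/∂x^i∂ξ^j − ∂²/∂x^j∂ξ^i`. -/
noncomputable def john (n : ℕ) (i j : Fin n) (ψ : (Fin n → ℝ) × (Fin n → ℝ) → ℝ) :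
    (Fin n → ℝ) × (Fin n → ℝ) → ℝ :=
  fun p => pdx n i (pdxi n j ψ) p - pdx n j (pdxi n i ψ) p

/-- Iterated John operators `J_{i₁j₁}⋯J_{i_rj_r}`. -/
noncomputable def iterJohn (n r : ℕ) (I J : Fin r → Fin n)
    (ψ : (Fin n → ℝ) × (Fin n → ℝ) → ℝ) : (Fin n → ℝ) × (Fin n → ℝ) → ℝ :=
  (List.finRange r).foldr (fun a acc => john n (I a) (J a) acc) ψ

open MeasureTheory

/-- `(J^{m,0} f)(x,ξ) = ∫ t^m f(x+tξ) dt`. -/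
noncomputable def Jmom0 (n m : ℕ) (f : SchwartzMap (Fin n → ℝ) ℝ) :
    (Fin n → ℝ) × (Fin n → ℝ) → ℝ :=
  fun p => ∫ t : ℝ, t ^ m * f (p.1 + t • p.2)


open MeasureTheory Metric

namespace JohnAux

variable {n : ℕ}

noncomputable def lmap (n : ℕ) (t : ℝ) :
    ((Fin n → ℝ) × (Fin n → ℝ)) →L[ℝ] (Fin n → ℝ) :=
  ContinuousLinearMap.fst ℝ _ _ + t • ContinuousLinearMap.snd ℝ _ _

lemma lmap_apply (t : ℝ) (p : (Fin n → ℝ) × (Fin n → ℝ)) : lmap n t p = p.1 + t • p.2 := rfl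

lemma norm_lmap_le (t : ℝ) : ‖lmap n t‖ ≤ 1 + |t| := by
  refine ContinuousLinearMap.opNorm_le_bound _ (by positivity) fun p => ?_
  rw [lmap_apply]
  calc ‖p.1 + t • p.2‖ ≤ ‖p.1‖ + ‖t • p.2‖ := norm_add_le _ _
    _ ≤ ‖p‖ + |t| * ‖p‖ := by
        rw [norm_smul, Real.norm_eq_abs]
        gcongr
        · exact norm_fst_le p
        · exact norm_snd_le p
    _ = (1 + |t|) * ‖p‖ := by ring

noncomputable def Fd (n m : ℕ) (g : SchwartzMap (Fin n → ℝ) ℝ)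
    (p : (Fin n → ℝ) × (Fin n → ℝ)) (t : ℝ) : ((Fin n → ℝ) × (Fin n → ℝ)) →L[ℝ] ℝ :=
  (t ^ m) • ((fderiv ℝ g (p.1 + t • p.2)).comp (lmap n t))

lemma decay_bound {F : Type*} [NormedAddCommGroup F] [NormedSpace ℝ F] (k : ℕ)
    (h : SchwartzMap (Fin n → ℝ) F) :
    ∃ C, 0 ≤ C ∧ ∀ y, (1 + ‖y‖) ^ k * ‖h y‖ ≤ C := by
  refine ⟨2 ^ k * (Finset.Iic ((k, 0) : ℕ × ℕ)).sup
      (fun m => SchwartzMap.seminorm ℝ m.1 m.2) h,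
    by positivity, fun y => ?_⟩
  have := SchwartzMap.one_add_le_sup_seminorm_apply (𝕜 := ℝ) (m := (k, 0)) le_rfl le_rfl h y
  simpa [norm_iteratedFDeriv_zero] using this

lemma hasFDerivAt_integrand (m : ℕ) (g : SchwartzMap (Fin n → ℝ) ℝ) (t : ℝ)
    (p : (Fin n → ℝ) × (Fin n → ℝ)) :
    HasFDerivAt (fun q : (Fin n → ℝ) × (Fin n → ℝ) => t ^ m * g (q.1 + t • q.2))
      (Fd n m g p t) p := by
  have hA : HasFDerivAt (fun q : (Fin n → ℝ) × (Fin n → ℝ) => q.1 + t • q.2) (lmap n t) p :=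
    (lmap n t).hasFDerivAt
  have hg : HasFDerivAt g (fderiv ℝ g (p.1 + t • p.2)) (p.1 + t • p.2) :=
    (g.differentiable.differentiableAt).hasFDerivAt
  exact (hg.comp p hA).const_mul (t ^ m)

lemma cont_Fd (m : ℕ) (g : SchwartzMap (Fin n → ℝ) ℝ) (p : (Fin n → ℝ) × (Fin n → ℝ)) :
    Continuous fun t => Fd n m g p t := by
  have hsm : Continuous (fderiv ℝ (g : (Fin n → ℝ) → ℝ)) :=
    (g.smooth ⊤).continuous_fderiv (by simp)
  have h1 : Continuous fun t : ℝ => fderiv ℝ g (p.1 + t • p.2) :=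
    hsm.comp (continuous_const.add (continuous_id.smul continuous_const))
  have h2 : Continuous fun t : ℝ => lmap n t := by
    unfold lmap
    exact continuous_const.add (continuous_id.smul continuous_const)
  exact (continuous_pow m).smul (h1.clm_comp h2)

lemma key (m : ℕ) (g : SchwartzMap (Fin n → ℝ) ℝ) (x ξ : Fin n → ℝ) (hξ : ξ ≠ 0) :
    Integrable (Fd n m g (x, ξ)) volume ∧
      HasFDerivAt (Jmom0 n m g) (∫ t : ℝ, Fd n m g (x, ξ) t) (x, ξ) := by
  set c : ℝ := ‖ξ‖ / 2 with hc_def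
  have hc : 0 < c := by
    have : 0 < ‖ξ‖ := norm_pos_iff.mpr hξ
    positivity
  set ε : ℝ := min 1 c with hε_def
  have hε : 0 < ε := lt_min one_pos hc
  set R : ℝ := ‖x‖ + 1 with hR_def
  have hR : 0 ≤ R := by positivity
  -- lower bound on ‖p.1 + t • p.2‖ for p in the ball
  have hy_lb : ∀ p ∈ ball ((x, ξ) : (Fin n → ℝ) × (Fin n → ℝ)) ε, ∀ t : ℝ,
      c * |t| - R ≤ ‖p.1 + t • p.2‖ := by
    intro p hp t
    rw [mem_ball, Prod.dist_eq, max_lt_iff] at hp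
    have h1 : ‖p.1‖ ≤ R := by
      have h1e : dist p.1 x < 1 := lt_of_lt_of_le hp.1 (min_le_left _ _)
      have := norm_sub_norm_le p.1 x
      rw [← dist_eq_norm] at this
      rw [hR_def]
      linarith
    have h2 : c ≤ ‖p.2‖ := by
      have hd : dist p.2 ξ < c := lt_of_lt_of_le hp.2 (min_le_right _ _)
      have := norm_sub_norm_le ξ p.2
      rw [norm_sub_rev, ← dist_eq_norm] at this
      rw [hc_def] at hd ⊢
      linarith
    have h3 : ‖t • p.2‖ ≤ ‖p.1 + t • p.2‖ + ‖p.1‖ := by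
      simpa using norm_sub_le (p.1 + t • p.2) p.1
    have h4 : c * |t| ≤ ‖t • p.2‖ := by
      rw [norm_smul, Real.norm_eq_abs, mul_comm]
      exact mul_le_mul_of_nonneg_left h2 (abs_nonneg t)
    linarith
  set K : ℝ := 1 + (R + 1) / c with hK_def
  have hK1 : 1 ≤ K := by
    have h0 : 0 ≤ (R + 1) / c := by positivity
    rw [hK_def]; linarith
  have hK0 : 0 ≤ K := by linarith
  have hlin : ∀ (t : ℝ) (y : Fin n → ℝ), c * |t| - R ≤ ‖y‖ → 1 + |t| ≤ K * (1 + ‖y‖) := by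
    intro t y hy
    have h1 : 0 ≤ ‖y‖ := norm_nonneg y
    have h2 : 0 ≤ |t| := abs_nonneg t
    have he : (R + 1) / c * c = R + 1 := div_mul_cancel₀ _ (ne_of_gt hc)
    have he0 : 0 ≤ (R + 1) / c := by positivity
    rw [hK_def]
    nlinarith [mul_nonneg he0 h1, mul_nonneg hc.le h1, mul_nonneg hR h1]
  obtain ⟨C1, hC10, hC1⟩ := decay_bound (m + 3) (SchwartzMap.fderivCLM ℝ (Fin n → ℝ) ℝ g)
  obtain ⟨C2, hC20, hC2⟩ := decay_bound (m + 2) g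
  have hC1' : ∀ y, (1 + ‖y‖) ^ (m + 3) * ‖fderiv ℝ (g : (Fin n → ℝ) → ℝ) y‖ ≤ C1 := by
    intro y
    have := hC1 y
    rwa [SchwartzMap.fderivCLM_apply] at this
  have ht2 : ∀ t : ℝ, (0:ℝ) < 1 + t ^ 2 := fun t => by positivity
  have habs : ∀ t : ℝ, 1 + t ^ 2 ≤ (1 + |t|) ^ 2 := fun t => by
    nlinarith [sq_abs t, abs_nonneg t]
  have h1t : ∀ t : ℝ, (0:ℝ) ≤ 1 + |t| := fun t => by positivity
  -- main bound for Fd on the ball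
  have hFd_le : ∀ t : ℝ, ∀ p ∈ ball ((x, ξ) : (Fin n → ℝ) × (Fin n → ℝ)) ε,
      ‖Fd n m g p t‖ ≤ K ^ (m + 3) * C1 * (1 + t ^ 2)⁻¹ := by
    intro t p hp
    have hy := hy_lb p hp t
    have hlin' := hlin t _ hy
    have hB := hC1' (p.1 + t • p.2)
    have step0 : ‖Fd n m g p t‖ = |t| ^ m * ‖(fderiv ℝ (g : (Fin n → ℝ) → ℝ)
        (p.1 + t • p.2)).comp (lmap n t)‖ := by
      have e1 := norm_smul (t ^ m)
        ((fderiv ℝ (g : (Fin n → ℝ) → ℝ) (p.1 + t • p.2)).comp (lmap n t))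
      rw [norm_pow, Real.norm_eq_abs] at e1
      exact e1
    have step1 : ‖Fd n m g p t‖ ≤
        (1 + |t|) ^ (m + 1) * ‖fderiv ℝ (g : (Fin n → ℝ) → ℝ) (p.1 + t • p.2)‖ := by
      rw [step0]
      calc |t| ^ m * ‖(fderiv ℝ (g : (Fin n → ℝ) → ℝ) (p.1 + t • p.2)).comp (lmap n t)‖
          ≤ (1 + |t|) ^ m * (‖fderiv ℝ (g : (Fin n → ℝ) → ℝ) (p.1 + t • p.2)‖ * (1 + |t|)) := by
            refine mul_le_mul ?_ ?_ (norm_nonneg _) (by positivity)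
            · exact pow_le_pow_left₀ (abs_nonneg t) (by linarith [abs_nonneg t]) m
            · exact (ContinuousLinearMap.opNorm_comp_le _ _).trans
                (mul_le_mul_of_nonneg_left (norm_lmap_le t) (norm_nonneg _))
        _ = (1 + |t|) ^ (m + 1) * ‖fderiv ℝ (g : (Fin n → ℝ) → ℝ) (p.1 + t • p.2)‖ := by ring
    have hmul : ‖Fd n m g p t‖ * (1 + t ^ 2) ≤ K ^ (m + 3) * C1 := by
      calc ‖Fd n m g p t‖ * (1 + t ^ 2)
          ≤ ((1 + |t|) ^ (m + 1) * ‖fderiv ℝ (g : (Fin n → ℝ) → ℝ) (p.1 + t • p.2)‖) *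
              (1 + |t|) ^ 2 :=
            mul_le_mul step1 (habs t) (ht2 t).le (by positivity)
        _ = (1 + |t|) ^ (m + 3) *
              ‖fderiv ℝ (g : (Fin n → ℝ) → ℝ) (p.1 + t • p.2)‖ := by ring
        _ ≤ (K * (1 + ‖p.1 + t • p.2‖)) ^ (m + 3) *
              ‖fderiv ℝ (g : (Fin n → ℝ) → ℝ) (p.1 + t • p.2)‖ :=
            mul_le_mul_of_nonneg_right (pow_le_pow_left₀ (h1t t) hlin' _) (norm_nonneg _)
        _ = K ^ (m + 3) * ((1 + ‖p.1 + t • p.2‖) ^ (m + 3) *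
              ‖fderiv ℝ (g : (Fin n → ℝ) → ℝ) (p.1 + t • p.2)‖) := by
            rw [mul_pow]; ring
        _ ≤ K ^ (m + 3) * C1 := mul_le_mul_of_nonneg_left hB (pow_nonneg hK0 _)
    rw [← div_eq_mul_inv, le_div_iff₀ (ht2 t)]
    exact hmul
  -- bound for the integrand itself at the center
  have hFg_le : ∀ t : ℝ, ‖t ^ m * g (x + t • ξ)‖ ≤ K ^ (m + 2) * C2 * (1 + t ^ 2)⁻¹ := by
    intro t
    have hy : c * |t| - R ≤ ‖x + t • ξ‖ := hy_lb (x, ξ) (mem_ball_self hε) t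
    have hlin' := hlin t _ hy
    have hB := hC2 (x + t • ξ)
    have hmul : ‖t ^ m * g (x + t • ξ)‖ * (1 + t ^ 2) ≤ K ^ (m + 2) * C2 := by
      have e0 : ‖t ^ m * g (x + t • ξ)‖ = |t| ^ m * ‖g (x + t • ξ)‖ := by
        rw [norm_mul, norm_pow, Real.norm_eq_abs]
      calc ‖t ^ m * g (x + t • ξ)‖ * (1 + t ^ 2)
          ≤ ((1 + |t|) ^ m * ‖g (x + t • ξ)‖) * (1 + |t|) ^ 2 := by
            rw [e0]
            exact mul_le_mul
              (mul_le_mul_of_nonneg_right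
                (pow_le_pow_left₀ (abs_nonneg t) (by linarith [abs_nonneg t]) m) (norm_nonneg _))
              (habs t) (ht2 t).le (by positivity)
        _ = (1 + |t|) ^ (m + 2) * ‖g (x + t • ξ)‖ := by ring
        _ ≤ (K * (1 + ‖x + t • ξ‖)) ^ (m + 2) * ‖g (x + t • ξ)‖ :=
            mul_le_mul_of_nonneg_right (pow_le_pow_left₀ (h1t t) hlin' _) (norm_nonneg _)
        _ = K ^ (m + 2) * ((1 + ‖x + t • ξ‖) ^ (m + 2) * ‖g (x + t • ξ)‖) := by
            rw [mul_pow]; ring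
        _ ≤ K ^ (m + 2) * C2 := mul_le_mul_of_nonneg_left hB (pow_nonneg hK0 _)
    rw [← div_eq_mul_inv, le_div_iff₀ (ht2 t)]
    exact hmul
  have bound_int : Integrable (fun t : ℝ => K ^ (m + 3) * C1 * (1 + t ^ 2)⁻¹) volume :=
    integrable_inv_one_add_sq.const_mul _
  have contF : ∀ p : (Fin n → ℝ) × (Fin n → ℝ),
      Continuous fun t : ℝ => t ^ m * g (p.1 + t • p.2) := fun p =>
    (continuous_pow m).mul
      (g.continuous.comp (continuous_const.add (continuous_id.smul continuous_const)))
  have hFd_int : Integrable (Fd n m g (x, ξ)) volume := by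
    refine Integrable.mono' bound_int (cont_Fd m g _).aestronglyMeasurable
      (Filter.Eventually.of_forall fun t => ?_)
    exact hFd_le t (x, ξ) (mem_ball_self hε)
  have hF_int : Integrable (fun t : ℝ => t ^ m * g (x + t • ξ)) volume := by
    refine Integrable.mono'
      (show Integrable (fun t : ℝ => K ^ (m + 2) * C2 * (1 + t ^ 2)⁻¹) volume from
        integrable_inv_one_add_sq.const_mul _)
      (contF (x, ξ)).aestronglyMeasurable
      (Filter.Eventually.of_forall fun t => hFg_le t)
  refine ⟨hFd_int, ?_⟩
  exact hasFDerivAt_integral_of_dominated_of_fderiv_le (𝕜 := ℝ) (μ := volume)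
    (F := fun p t => t ^ m * g (p.1 + t • p.2)) (F' := Fd n m g) (x₀ := (x, ξ))
    (bound := fun t => K ^ (m + 3) * C1 * (1 + t ^ 2)⁻¹) (ball_mem_nhds _ hε)
    (Filter.Eventually.of_forall fun p => (contF p).aestronglyMeasurable)
    hF_int (cont_Fd m g _).aestronglyMeasurable
    (Filter.Eventually.of_forall fun t p hp => hFd_le t p hp)
    bound_int
    (Filter.Eventually.of_forall fun t p _ => hasFDerivAt_integrand m g t p)


lemma fderiv_Jmom0_apply (m : ℕ) (g : SchwartzMap (Fin n → ℝ) ℝ) (x ξ : Fin n → ℝ)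
    (hξ : ξ ≠ 0) (w : (Fin n → ℝ) × (Fin n → ℝ)) :
    fderiv ℝ (Jmom0 n m g) (x, ξ) w
      = ∫ t : ℝ, t ^ m * fderiv ℝ (g : (Fin n → ℝ) → ℝ) (x + t • ξ) (w.1 + t • w.2) := by
  obtain ⟨hint, hder⟩ := key m g x ξ hξ
  rw [hder.fderiv, ContinuousLinearMap.integral_apply hint w]
  congr 1

lemma pdx_Jmom0 (m : ℕ) (g : SchwartzMap (Fin n → ℝ) ℝ) (x ξ : Fin n → ℝ)
    (hξ : ξ ≠ 0) (i : Fin n) :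
    pdx n i (Jmom0 n m g) (x, ξ)
      = Jmom0 n m (LineDeriv.lineDerivOp (Pi.single i 1 : Fin n → ℝ) g) (x, ξ) := by
  show fderiv ℝ (Jmom0 n m g) (x, ξ) (Pi.single i 1, 0) = _
  rw [fderiv_Jmom0_apply m g x ξ hξ]
  show _ = ∫ t : ℝ, t ^ m * (LineDeriv.lineDerivOp (Pi.single i 1 : Fin n → ℝ) g) (x + t • ξ)
  congr 1
  funext t
  simp [SchwartzMap.lineDerivOp_apply_eq_fderiv]

lemma pdxi_Jmom0 (m : ℕ) (g : SchwartzMap (Fin n → ℝ) ℝ) (x ξ : Fin n → ℝ)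
    (hξ : ξ ≠ 0) (j : Fin n) :
    pdxi n j (Jmom0 n m g) (x, ξ)
      = Jmom0 n (m + 1) (LineDeriv.lineDerivOp (Pi.single j 1 : Fin n → ℝ) g) (x, ξ) := by
  show fderiv ℝ (Jmom0 n m g) (x, ξ) (0, Pi.single j 1) = _
  rw [fderiv_Jmom0_apply m g x ξ hξ]
  show _ = ∫ t : ℝ, t ^ (m + 1) * (LineDeriv.lineDerivOp (Pi.single j 1 : Fin n → ℝ) g) (x + t • ξ)
  congr 1
  funext t
  simp only [SchwartzMap.lineDerivOp_apply_eq_fderiv, zero_add, _root_.map_smul, smul_eq_mul]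
  ring

lemma pderiv_comm (f : SchwartzMap (Fin n → ℝ) ℝ) (i j : Fin n) :
    LineDeriv.lineDerivOp (Pi.single i 1 : Fin n → ℝ) (LineDeriv.lineDerivOp (Pi.single j 1 : Fin n → ℝ) f)
      = LineDeriv.lineDerivOp (Pi.single j 1 : Fin n → ℝ) (LineDeriv.lineDerivOp (Pi.single i 1 : Fin n → ℝ) f) := by
  ext y
  have hcoe : ∀ v : Fin n → ℝ, ⇑(LineDeriv.lineDerivOp v f : SchwartzMap (Fin n → ℝ) ℝ)
      = fun z => fderiv ℝ (f : (Fin n → ℝ) → ℝ) z v :=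
    fun v => funext fun z => SchwartzMap.lineDerivOp_apply_eq_fderiv v f z
  simp only [SchwartzMap.lineDerivOp_apply_eq_fderiv, hcoe]
  have hf' : ∀ z, HasFDerivAt (f : (Fin n → ℝ) → ℝ) (fderiv ℝ (f : (Fin n → ℝ) → ℝ) z) z :=
    fun z => f.differentiableAt.hasFDerivAt
  have hD : DifferentiableAt ℝ (fderiv ℝ (f : (Fin n → ℝ) → ℝ)) y := by
    have h1 : ContDiff ℝ 1 (fderiv ℝ (f : (Fin n → ℝ) → ℝ)) :=
      (f.smooth 2).fderiv_right (by exact_mod_cast le_rfl)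
    exact (h1.differentiable one_ne_zero).differentiableAt
  have hf'' : HasFDerivAt (fderiv ℝ (f : (Fin n → ℝ) → ℝ))
      (fderiv ℝ (fderiv ℝ (f : (Fin n → ℝ) → ℝ)) y) y := hD.hasFDerivAt
  have hsec := second_derivative_symmetric hf' hf''
  have happ : ∀ v : Fin n → ℝ,
      fderiv ℝ (fun z => fderiv ℝ (f : (Fin n → ℝ) → ℝ) z v) y
        = (ContinuousLinearMap.apply ℝ ℝ v).comp
            (fderiv ℝ (fderiv ℝ (f : (Fin n → ℝ) → ℝ)) y) := by
    intro v
    have h := ((ContinuousLinearMap.apply ℝ ℝ v).hasFDerivAt.comp y hf'')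
    exact h.fderiv
  rw [happ, happ]
  exact hsec _ _

end JohnAux

/-- The John operator annihilates `J^{m,0} f` for Schwartz `f`. -/
theorem stmt5 (n m : ℕ) (f : SchwartzMap (Fin n → ℝ) ℝ) :
    ∀ i j : Fin n, ∀ x ξ : Fin n → ℝ, ξ ≠ 0 →
      john n i j (Jmom0 n m f) (x, ξ) = 0 := by
  intro i j x ξ hξ
  have hU : IsOpen {p : (Fin n → ℝ) × (Fin n → ℝ) | p.2 ≠ 0} :=
    isOpen_compl_singleton.preimage continuous_snd
  have key2 : ∀ a b : Fin n, pdx n a (pdxi n b (Jmom0 n m f)) (x, ξ)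
      = Jmom0 n (m + 1) (LineDeriv.lineDerivOp (Pi.single a 1 : Fin n → ℝ)
          (LineDeriv.lineDerivOp (Pi.single b 1 : Fin n → ℝ) f)) (x, ξ) := by
    intro a b
    have hmem : ((x, ξ) : (Fin n → ℝ) × (Fin n → ℝ)) ∈
        {p : (Fin n → ℝ) × (Fin n → ℝ) | p.2 ≠ 0} := hξ
    have hev : pdxi n b (Jmom0 n m f) =ᶠ[nhds (x, ξ)]
        Jmom0 n (m + 1) (LineDeriv.lineDerivOp (Pi.single b 1 : Fin n → ℝ) f) := by
      filter_upwards [hU.mem_nhds hmem] with p hp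
      have h := JohnAux.pdxi_Jmom0 m f p.1 p.2 hp b
      simpa using h
    show fderiv ℝ (pdxi n b (Jmom0 n m f)) (x, ξ) (Pi.single a 1, 0) = _
    rw [hev.fderiv_eq]
    exact JohnAux.pdx_Jmom0 (m + 1) _ x ξ hξ a
  show pdx n i (pdxi n j (Jmom0 n m f)) (x, ξ) - pdx n j (pdxi n i (Jmom0 n m f)) (x, ξ) = 0
  rw [key2 i j, key2 j i, JohnAux.pderiv_comm f i j, sub_self]
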